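/- Let Δ be a 2-disk contained in a closed Riemannian surface N of intrinsic diameter D. Then the intrinsic diameter of Δ satisfies diam(Δ) ≤ D + ℓ(∂Δ)/2, where ℓ(∂Δ) is the length of the boundary of Δ. -/

import Mathlib

open Set Metric Filter Topology
open scoped Manifold ENNReal

noncomputable section

namespace OGC

variable {X : Type*} [MetricSpace X]

/-- The length of a curve `γ`, viewed as parameterized on `[0,1]`. -/
def curveLen (γ : ℝ → X) : ℝ≥0∞ := eVariationOn γ (Set.Icc 0 1)

/-- A (rectifiable-parameterized) curve: a map continuous on `[0,1]`. -/
def IsCurve (γ : ℝ → X) : Prop := ContinuousOn γ (Set.Icc 0 1)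

/-- The reverse of a curve. -/
def rev (γ : ℝ → X) : ℝ → X := fun t => γ (1 - t)

/-- Concatenation of two curves. -/
def concat (f g : ℝ → X) : ℝ → X := fun t => if t ≤ 1 / 2 then f (2 * t) else g (2 * t - 1)

/-- `H` is a homotopy (parameterized on the unit square) from the curve `γ` to the curve `β`. -/
def IsHomotopy (H : ℝ → ℝ → X) (γ β : ℝ → X) : Prop :=
  ContinuousOn (fun q : ℝ × ℝ => H q.1 q.2) (Set.Icc 0 1 ×ˢ Set.Icc 0 1) ∧
  (∀ t ∈ Set.Icc (0:ℝ) 1, H 0 t = γ t) ∧ (∀ t ∈ Set.Icc (0:ℝ) 1, H 1 t = β t)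

/-- The homotopy `H` keeps the initial point at `p` and the terminal point at `q` throughout. -/
def FixesEndpoints (H : ℝ → ℝ → X) (p q : X) : Prop :=
  ∀ s ∈ Set.Icc (0:ℝ) 1, H s 0 = p ∧ H s 1 = q

/-- Every curve of the homotopy `H` has length at most `c`. -/
def LengthBound (H : ℝ → ℝ → X) (c : ℝ) : Prop :=
  ∀ s ∈ Set.Icc (0:ℝ) 1, curveLen (H s) ≤ ENNReal.ofReal c

/-- `γ` and `β` are homotopic as loops based at `p`, through loops based at `p`
of length at most `c`. -/
def BasedLoopHomotopic (p : X) (γ β : ℝ → X) (c : ℝ) : Prop :=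
  ∃ H, IsHomotopy H γ β ∧ FixesEndpoints H p p ∧ LengthBound H c

/-- `γ` and `β` are path homotopic (with fixed endpoints `p`, `q`) through paths
of length at most `c`. -/
def PathHomotopic (p q : X) (γ β : ℝ → X) (c : ℝ) : Prop :=
  ∃ H, IsHomotopy H γ β ∧ FixesEndpoints H p q ∧ LengthBound H c

/-- The effective loop shortening property of the subset `V` of the ambient space `X`,
restricted to basepoints in `K`, with parameters `c`, `a` and `k`:  `a` bounds the
extrinsic diameter of `V`, `k ≥ 1`, and for all sufficiently small `δ > 0`, every loop
in `V` based at a point of `K` of length at most `2ak + δ` can be homotoped in `X`, with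
fixed basepoint and through loops of length at most `c`, to a loop of length at
most `(2k-2)a`. -/
def ELSPRestrictedTo (V K : Set X) (c a k : ℝ) : Prop :=
  (∀ x ∈ V, ∀ y ∈ V, dist x y ≤ a) ∧ 1 ≤ k ∧
  ∃ δ₀ > (0:ℝ), ∀ δ : ℝ, 0 < δ → δ ≤ δ₀ →
    ∀ γ : ℝ → X, IsCurve γ → (∀ t ∈ Set.Icc (0:ℝ) 1, γ t ∈ V) →
      γ 0 ∈ K → γ 1 = γ 0 →
      curveLen γ ≤ ENNReal.ofReal (2 * a * k + δ) →
      ∃ β : ℝ → X, IsCurve β ∧ β 0 = γ 0 ∧ β 1 = γ 0 ∧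
        curveLen β ≤ ENNReal.ofReal ((2 * k - 2) * a) ∧
        BasedLoopHomotopic (γ 0) γ β c

/-- The effective loop shortening property (with unrestricted basepoints in `V`). -/
def ELSP (V : Set X) (c a k : ℝ) : Prop := ELSPRestrictedTo V V c a k

/-- `γ : [0, L] → X` is a unit-speed local geodesic. -/
def IsUnitSpeedGeodesic (γ : ℝ → X) (L : ℝ) : Prop :=
  ∀ t ∈ Set.Icc 0 L, ∃ ε > (0:ℝ),
    ∀ s ∈ Set.Icc 0 L ∩ Set.Icc (t - ε) (t + ε),
      ∀ u ∈ Set.Icc 0 L ∩ Set.Icc (t - ε) (t + ε), dist (γ s) (γ u) = |s - u|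

/-- Metric (first-variation) formulation of the fact that the unit-speed curve `γ`
leaves `N` orthogonally at `γ 0`: the distance to `N` grows at unit rate. -/
def MeetsOrthogonally (γ : ℝ → X) (N : Set X) : Prop :=
  Filter.Tendsto (fun t => Metric.infDist (γ t) N / t) (nhdsWithin 0 (Set.Ioi 0)) (nhds 1)

/-- `γ : [0, L] → X` is a nonconstant (unit-speed) geodesic chord with endpoints on `N`,
meeting `N` orthogonally at both endpoints; its length is `L`. -/
def IsOrthogonalGeodesicChord (N : Set X) (γ : ℝ → X) (L : ℝ) : Prop :=
  0 < L ∧ γ 0 ∈ N ∧ γ L ∈ N ∧ IsUnitSpeedGeodesic γ L ∧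
  MeetsOrthogonally γ N ∧ MeetsOrthogonally (fun t => γ (L - t)) N

/-- `N` is a (strong) deformation retract of `M`: there is a retraction of `M` onto `N`
homotopic to the identity relative to `N`. -/
def IsDeformationRetractRel {M : Type*} [TopologicalSpace M] (N : Set M) : Prop :=
  ∃ r : C(M, M), (∀ x, r x ∈ N) ∧ (∀ x ∈ N, r x = x) ∧
    (ContinuousMap.id M).HomotopicRel r N

/-- `N` is a deformation retract of `M`: there is a retraction of `M` onto `N`
homotopic to the identity. -/
def IsDeformationRetract {M : Type*} [TopologicalSpace M] (N : Set M) : Prop :=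
  ∃ r : C(M, M), (∀ x, r x ∈ N) ∧ (∀ x ∈ N, r x = x) ∧
    (ContinuousMap.id M).Homotopic r

/-- The inclusion of `N` into `M` is a homotopy equivalence. -/
def InclusionIsHomotopyEquiv {M : Type*} [TopologicalSpace M] (N : Set M) : Prop :=
  ∃ e : ContinuousMap.HomotopyEquiv N M, ⇑e.toFun = (Subtype.val : N → M)

/-- Nontriviality of the relative homotopy group `π_i(M, N)`: there is a map of the
`i`-disk into `M` taking the boundary sphere into `N` that is not homotopic, relative
to the boundary sphere, to a map with image in `N` (compression criterion). -/
def RelHomotopyNontrivial {M : Type*} [TopologicalSpace M] (N : Set M) (i : ℕ) : Prop :=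
  ∃ f : C(Metric.closedBall (0 : EuclideanSpace ℝ (Fin i)) 1, M),
    (∀ x : Metric.closedBall (0 : EuclideanSpace ℝ (Fin i)) 1,
        ‖(x : EuclideanSpace ℝ (Fin i))‖ = 1 → f x ∈ N) ∧
    ¬ ∃ g : C(Metric.closedBall (0 : EuclideanSpace ℝ (Fin i)) 1, M),
        (∀ x, g x ∈ N) ∧
        f.HomotopicRel g {x | ‖(x : EuclideanSpace ℝ (Fin i))‖ = 1}

end OGC

section MyHelpers
open OGC
set_option linter.unusedSectionVars false


lemma punctured_ball_connected (c : EuclideanSpace ℝ (Fin 2)) {r : ℝ} (hr : 0 < r) :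
    IsConnected (Metric.ball c r \ {c}) := by
  have hrank : 1 < Module.rank ℝ (EuclideanSpace ℝ (Fin 2)) := by
    have := finrank_euclideanSpace_fin (𝕜 := ℝ) (n := 2)
    rw [← Module.finrank_eq_rank, this]; norm_num
  have hT : IsConnected ((Set.Ioo (0:ℝ) r) ×ˢ (Metric.sphere (0 : EuclideanSpace ℝ (Fin 2)) 1)) :=
    (isConnected_Ioo hr).prod (isConnected_sphere hrank 0 zero_le_one)
  have himg : (fun p : ℝ × EuclideanSpace ℝ (Fin 2) => c + p.1 • p.2) ''
      ((Set.Ioo (0:ℝ) r) ×ˢ (Metric.sphere (0 : EuclideanSpace ℝ (Fin 2)) 1))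
      = Metric.ball c r \ {c} := by
    ext z
    constructor
    · rintro ⟨⟨t, v⟩, ⟨⟨ht0, htr⟩, hv⟩, rfl⟩
      simp only [mem_sphere_iff_norm, sub_zero] at hv
      constructor
      · rw [Metric.mem_ball, dist_eq_norm]
        simp [norm_smul, hv, abs_of_pos ht0, htr]
      · simp only [Set.mem_singleton_iff]
        intro h
        have : ‖(t • v : EuclideanSpace ℝ (Fin 2))‖ = 0 := by
          have := congrArg (fun w => w - c) h
          simp at this
          simp [this]
        rw [norm_smul, hv] at this
        simp [abs_of_pos ht0] at this
        exact absurd this (ne_of_gt ht0)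
    · rintro ⟨hzball, hzc⟩
      simp only [Set.mem_singleton_iff] at hzc
      set t := ‖z - c‖ with ht
      have ht0 : 0 < t := by
        simp only [ht, norm_pos_iff, sub_ne_zero]; exact hzc
      have htr : t < r := by rw [ht, ← dist_eq_norm]; exact Metric.mem_ball.1 hzball
      refine ⟨(t, t⁻¹ • (z - c)), ⟨⟨ht0, htr⟩, ?_⟩, ?_⟩
      · simp only [mem_sphere_iff_norm, sub_zero, norm_smul, norm_inv, norm_norm]
        rw [Real.norm_eq_abs, abs_of_pos ht0]
        field_simp
        exact ht.symm
      · simp only [smul_smul]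
        rw [mul_inv_cancel₀ (ne_of_gt ht0), one_smul]
        abel
  have hcont : Continuous (fun p : ℝ × EuclideanSpace ℝ (Fin 2) => c + p.1 • p.2) :=
    continuous_const.add (continuous_fst.smul continuous_snd)
  rw [← himg]
  exact hT.image _ hcont.continuousOn

lemma frontier_singleton_absurd {N : Type*} [MetricSpace N]
    [ChartedSpace (EuclideanSpace ℝ (Fin 2)) N]
    {Δ : Set N} (hΔclosed : IsClosed Δ) (hconn : IsPreconnected Δ)
    (hq : ∃ q₁ ∈ Δ, ∃ q₂ ∈ Δ, q₁ ≠ q₂)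
    {p : N} (hfr : frontier Δ = {p}) : False := by
  have hpfr : p ∈ frontier Δ := by rw [hfr]; rfl
  have hpΔ : p ∈ Δ := by
    have := frontier_subset_closure (s := Δ) hpfr
    rwa [hΔclosed.closure_eq] at this
  have hint : interior Δ = Δ \ {p} := by
    apply Set.Subset.antisymm
    · intro x hx
      refine ⟨interior_subset hx, ?_⟩
      intro hxp
      simp only [Set.mem_singleton_iff] at hxp
      subst hxp
      exact hpfr.2 hx
    · rintro x ⟨hxΔ, hxp⟩
      by_contra h
      have hxf : x ∈ frontier Δ := ⟨subset_closure hxΔ, h⟩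
      rw [hfr] at hxf
      exact hxp hxf
  set φ := chartAt (EuclideanSpace ℝ (Fin 2)) p with hφ
  have hps : p ∈ φ.source := mem_chart_source _ p
  have hpt : φ p ∈ φ.target := φ.map_source hps
  obtain ⟨r, hr0, hball⟩ := Metric.isOpen_iff.1 φ.open_target _ hpt
  set U := φ.source ∩ φ ⁻¹' (Metric.ball (φ p) r) with hU
  have hUopen : IsOpen U := φ.isOpen_inter_preimage Metric.isOpen_ball
  have hpU : p ∈ U := ⟨hps, Metric.mem_ball_self hr0⟩
  have hVconn : IsConnected (φ.symm '' (Metric.ball (φ p) r \ {φ p})) := by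
    refine (punctured_ball_connected (φ p) hr0).image _ ?_
    exact φ.continuousOn_symm.mono ((Set.diff_subset).trans hball)
  have hVeq : φ.symm '' (Metric.ball (φ p) r \ {φ p}) = U \ {p} := by
    ext w
    constructor
    · rintro ⟨z, ⟨hzball, hzc⟩, rfl⟩
      have hzt : z ∈ φ.target := hball hzball
      refine ⟨⟨φ.map_target hzt, ?_⟩, ?_⟩
      · simp only [Set.mem_preimage, φ.right_inv hzt]
        exact hzball
      · simp only [Set.mem_singleton_iff]
        intro h
        apply hzc
        have : z = φ (φ.symm z) := (φ.right_inv hzt).symm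
        rw [h] at this
        simp [this]
    · rintro ⟨⟨hws, hwball⟩, hwp⟩
      refine ⟨φ w, ⟨hwball, ?_⟩, φ.left_inv hws⟩
      simp only [Set.mem_singleton_iff]
      intro h
      apply hwp
      have := φ.injOn hws hps h
      simp [this]
  rw [hVeq] at hVconn
  have hVpre : IsPreconnected (U \ {p}) := hVconn.isPreconnected
  have h2 : ((U \ {p}) ∩ Δᶜ).Nonempty := by
    have hpc : p ∈ closure Δᶜ := by
      rw [frontier_eq_closure_inter_closure] at hpfr
      exact hpfr.2
    obtain ⟨w, hwU, hwc⟩ := mem_closure_iff.1 hpc U hUopen hpU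
    exact ⟨w, ⟨hwU, by simp only [Set.mem_singleton_iff]; intro h; rw [h] at hwc; exact hwc hpΔ⟩, hwc⟩
  have h1 : ((U \ {p}) ∩ interior Δ).Nonempty := by
    obtain ⟨q₁, hq₁, q₂, hq₂, hqne⟩ := hq
    have hcover : Δ ⊆ U ∪ {p}ᶜ := by
      intro x hx
      by_cases hxp : x = p
      · subst hxp; exact Or.inl hpU
      · exact Or.inr hxp
    have hne2 : (Δ ∩ {p}ᶜ).Nonempty := by
      by_cases h1p : q₁ = p
      · refine ⟨q₂, hq₂, fun h => ?_⟩
        simp only [Set.mem_singleton_iff] at h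
        exact hqne (by rw [h1p, h])
      · exact ⟨q₁, hq₁, h1p⟩
    obtain ⟨w, hwΔ, hwU, hwp⟩ := hconn U {p}ᶜ hUopen isOpen_compl_singleton hcover
      ⟨p, hpΔ, hpU⟩ hne2
    exact ⟨w, ⟨hwU, hwp⟩, by rw [hint]; exact ⟨hwΔ, hwp⟩⟩
  have hcover' : U \ {p} ⊆ interior Δ ∪ Δᶜ := by
    rintro x ⟨hxU, hxp⟩
    by_cases hxΔ : x ∈ Δ
    · left; rw [hint]; exact ⟨hxΔ, hxp⟩
    · right; exact hxΔ
  obtain ⟨w, _, hw1, hw2⟩ := hVpre (interior Δ) Δᶜ isOpen_interior hΔclosed.isOpen_compl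
    hcover' h1 h2
  exact hw2 (interior_subset hw1)

section Helpers
variable {X : Type*} [MetricSpace X]

lemma continuousOn_union_isClosed {α β : Type*} [TopologicalSpace α] [TopologicalSpace β]
    {f : α → β} {s t : Set α} (hs : IsClosed s) (ht : IsClosed t)
    (hfs : ContinuousOn f s) (hft : ContinuousOn f t) : ContinuousOn f (s ∪ t) := by
  intro x hx
  by_cases hxs : x ∈ s <;> by_cases hxt : x ∈ t
  · exact (hfs x hxs).union (hft x hxt)
  · refine (hfs x hxs).mono_of_mem_nhdsWithin ?_
    rw [mem_nhdsWithin]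
    exact ⟨tᶜ, ht.isOpen_compl, hxt, fun y hy => hy.2.resolve_right hy.1⟩
  · refine (hft x hxt).mono_of_mem_nhdsWithin ?_
    rw [mem_nhdsWithin]
    exact ⟨sᶜ, hs.isOpen_compl, hxs, fun y hy => hy.2.resolve_left hy.1⟩
  · exact absurd hx (by simp [hxs, hxt])

lemma affine_image (c d : ℝ) (h : c ≤ d) :
    (fun t : ℝ => c + t * (d - c)) '' Set.Icc 0 1 = Set.Icc c d := by
  rw [← segment_eq_Icc h, segment_eq_image' ℝ c d]
  simp [smul_eq_mul]

lemma evar_affine (f : ℝ → X) {c d : ℝ} (h : c ≤ d) :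
    eVariationOn (fun t => f (c + t * (d - c))) (Set.Icc 0 1) = eVariationOn f (Set.Icc c d) := by
  have hmono : MonotoneOn (fun t : ℝ => c + t * (d - c)) (Set.Icc 0 1) := by
    intro a _ b _ hab
    have : 0 ≤ d - c := sub_nonneg.2 h
    dsimp only
    nlinarith
  have := eVariationOn.comp_eq_of_monotoneOn f _ hmono
  rw [affine_image c d h] at this
  exact this

lemma evar_affine_anti (f : ℝ → X) {c d : ℝ} (h : d ≤ c) :
    eVariationOn (fun t => f (c + t * (d - c))) (Set.Icc 0 1) = eVariationOn f (Set.Icc d c) := by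
  have hanti : AntitoneOn (fun t : ℝ => c + t * (d - c)) (Set.Icc 0 1) := by
    intro a _ b _ hab
    have : d - c ≤ 0 := sub_nonpos.2 h
    dsimp only
    nlinarith
  have := eVariationOn.comp_eq_of_antitoneOn f _ hanti
  rw [show ((fun t : ℝ => c + t * (d - c)) '' Set.Icc 0 1) = Set.Icc d c from ?_] at this
  · exact this
  · have : (fun t : ℝ => c + t * (d - c)) = (fun s : ℝ => c + (1 - s) * (d - c)) ∘ (fun t : ℝ => 1 - t) := by
      funext t; simp
    rw [this, Set.image_comp]
    have h1 : (fun t : ℝ => 1 - t) '' Set.Icc 0 1 = Set.Icc 0 1 := by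
      ext y; simp only [Set.mem_image, Set.mem_Icc]
      constructor
      · rintro ⟨x, ⟨h0, h1⟩, rfl⟩; constructor <;> linarith
      · rintro ⟨h0, h1⟩; exact ⟨1 - y, ⟨by linarith, by linarith⟩, by ring⟩
    rw [h1]
    have h2 : (fun s : ℝ => c + (1 - s) * (d - c)) = fun s : ℝ => d + s * (c - d) := by
      funext s; ring
    rw [h2, affine_image d c h]

/-- Affine-reparameterized restriction of a curve. -/
lemma affine_curveLen (f : ℝ → X) {c d : ℝ} (h : c ≤ d) :
    curveLen (fun t => f (c + t * (d - c))) = eVariationOn f (Set.Icc c d) :=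
  evar_affine f h

lemma affine_isCurve (f : ℝ → X) {c d : ℝ} (hf : ContinuousOn f (Set.Icc 0 1))
    (hc : c ∈ Set.Icc (0:ℝ) 1) (hd : d ∈ Set.Icc (0:ℝ) 1) :
    IsCurve (fun t => f (c + t * (d - c))) := by
  refine hf.comp ?_ ?_
  · exact (continuous_const.add (continuous_id.mul continuous_const)).continuousOn
  · intro t ht
    rcases le_total c d with h | h
    · have h1 : c + t * (d - c) ∈ Set.Icc c d := by
        constructor <;> nlinarith [ht.1, ht.2, sub_nonneg.2 h]
      exact ⟨le_trans hc.1 h1.1, le_trans h1.2 hd.2⟩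
    · have h1 : c + t * (d - c) ∈ Set.Icc d c := by
        constructor <;> nlinarith [ht.1, ht.2, sub_nonneg.2 h]
      exact ⟨le_trans hd.1 h1.1, le_trans h1.2 hc.2⟩

lemma concat_apply_zero (f g : ℝ → X) : concat f g 0 = f 0 := by
  simp [concat]

lemma concat_apply_one (f g : ℝ → X) : concat f g 1 = g 1 := by
  norm_num [concat]

lemma concat_isCurve {f g : ℝ → X} (hf : IsCurve f) (hg : IsCurve g) (hfg : f 1 = g 0) :
    IsCurve (concat f g) := by
  have h1 : ContinuousOn (concat f g) (Set.Icc 0 (1/2 : ℝ)) := by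
    have hc : ContinuousOn (fun t => f (2 * t)) (Set.Icc 0 (1/2 : ℝ)) := by
      refine hf.comp (continuous_const.mul continuous_id).continuousOn ?_
      intro t ht
      obtain ⟨ht1, ht2⟩ := ht
      simp only [Set.mem_Icc]
      constructor <;> linarith
    refine hc.congr ?_
    intro t ht
    simp only [concat]
    rw [if_pos ht.2]
  have h2 : ContinuousOn (concat f g) (Set.Icc (1/2 : ℝ) 1) := by
    have hc : ContinuousOn (fun t => g (2 * t - 1)) (Set.Icc (1/2 : ℝ) 1) := by
      refine hg.comp ((continuous_const.mul continuous_id).sub continuous_const).continuousOn ?_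
      intro t ht
      obtain ⟨ht1, ht2⟩ := ht
      simp only [Set.mem_Icc]
      constructor <;> linarith
    refine hc.congr ?_
    intro t ht
    by_cases h : t ≤ 1/2
    · have ht2 : t = 1/2 := le_antisymm h ht.1
      subst ht2
      simp only [concat]
      rw [if_pos h]
      norm_num [hfg]
    · simp only [concat]
      rw [if_neg h]
  have : Set.Icc (0:ℝ) 1 = Set.Icc 0 (1/2) ∪ Set.Icc (1/2) 1 :=
    (Set.Icc_union_Icc_eq_Icc (by norm_num) (by norm_num)).symm
  rw [IsCurve, this]
  exact continuousOn_union_isClosed isClosed_Icc isClosed_Icc h1 h2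

lemma concat_curveLen {f g : ℝ → X} (hfg : f 1 = g 0) :
    curveLen (concat f g) = curveLen f + curveLen g := by
  have key := eVariationOn.Icc_add_Icc (concat f g) (s := Set.univ)
    (a := (0:ℝ)) (b := 1/2) (c := 1) (by norm_num) (by norm_num) (Set.mem_univ _)
  simp only [Set.univ_inter] at key
  have e1 : eVariationOn (concat f g) (Set.Icc 0 (1/2:ℝ)) = curveLen f := by
    have heq : Set.EqOn (concat f g) (f ∘ fun t => 2*t) (Set.Icc 0 (1/2:ℝ)) := by
      intro t ht
      simp only [concat, Function.comp]
      rw [if_pos ht.2]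
    rw [eVariationOn.eq_of_eqOn heq]
    have hm : MonotoneOn (fun t : ℝ => 2*t) (Set.Icc 0 (1/2:ℝ)) := fun a _ b _ hab => by dsimp only; linarith
    rw [eVariationOn.comp_eq_of_monotoneOn f _ hm]
    unfold curveLen
    congr 1
    ext y
    simp only [Set.mem_image, Set.mem_Icc]
    constructor
    · rintro ⟨x, ⟨h0, h1⟩, rfl⟩
      constructor <;> linarith
    · rintro ⟨h0, h1⟩
      exact ⟨y/2, ⟨by linarith, by linarith⟩, by ring⟩
  have e2 : eVariationOn (concat f g) (Set.Icc (1/2:ℝ) 1) = curveLen g := by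
    have heq : Set.EqOn (concat f g) (g ∘ fun t => 2*t - 1) (Set.Icc (1/2:ℝ) 1) := by
      intro t ht
      by_cases h : t ≤ 1/2
      · have ht2 : t = 1/2 := le_antisymm h ht.1
        subst ht2
        simp only [concat, Function.comp]
        rw [if_pos h]
        norm_num [hfg]
      · simp only [concat, Function.comp]
        rw [if_neg h]
    rw [eVariationOn.eq_of_eqOn heq]
    have hm : MonotoneOn (fun t : ℝ => 2*t - 1) (Set.Icc (1/2:ℝ) 1) :=
      fun a _ b _ hab => by dsimp only; linarith
    rw [eVariationOn.comp_eq_of_monotoneOn g _ hm]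
    unfold curveLen
    congr 1
    ext y
    simp only [Set.mem_image, Set.mem_Icc]
    constructor
    · rintro ⟨x, ⟨h0, h1⟩, rfl⟩
      constructor <;> linarith
    · rintro ⟨h0, h1⟩
      exact ⟨(y+1)/2, ⟨by linarith, by linarith⟩, by ring⟩
  rw [e1, e2] at key
  exact key.symm

lemma concat_mem {f g : ℝ → X} {S : Set X} (hf : ∀ t ∈ Set.Icc (0:ℝ) 1, f t ∈ S)
    (hg : ∀ t ∈ Set.Icc (0:ℝ) 1, g t ∈ S) : ∀ t ∈ Set.Icc (0:ℝ) 1, concat f g t ∈ S := by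
  intro t ht
  unfold concat
  split
  · exact hf _ ⟨by linarith [ht.1], by linarith⟩
  · next h => exact hg _ ⟨by push_neg at h; linarith, by linarith [ht.2]⟩

lemma half_le_min {L1 L2 T : ℝ≥0∞} (h : L1 + L2 = T) : min L1 L2 ≤ T / 2 := by
  rw [ENNReal.le_div_iff_mul_le (Or.inl two_ne_zero) (Or.inl ENNReal.ofNat_ne_top)]
  calc min L1 L2 * 2 = min L1 L2 + min L1 L2 := by rw [mul_two]
    _ ≤ L1 + L2 := add_le_add (min_le_left _ _) (min_le_right _ _)
    _ = T := h

/-- Existence of a boundary arc of length at most half the loop length. -/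
lemma arc_exists (σ : ℝ → X) (hσ : IsCurve σ) (hσloop : σ 1 = σ 0) {s u : ℝ}
    (hs : s ∈ Set.Icc (0:ℝ) 1) (hu : u ∈ Set.Icc (0:ℝ) 1) :
    ∃ τ : ℝ → X, IsCurve τ ∧ τ 0 = σ s ∧ τ 1 = σ u ∧
      (∀ t ∈ Set.Icc (0:ℝ) 1, τ t ∈ σ '' Set.Icc 0 1) ∧ curveLen τ ≤ curveLen σ / 2 := by
  -- first handle the case s ≤ u; the other case follows by reversing
  suffices H : ∀ s u : ℝ, s ∈ Set.Icc (0:ℝ) 1 → u ∈ Set.Icc (0:ℝ) 1 → s ≤ u →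
      ∃ τ : ℝ → X, IsCurve τ ∧ τ 0 = σ s ∧ τ 1 = σ u ∧
        (∀ t ∈ Set.Icc (0:ℝ) 1, τ t ∈ σ '' Set.Icc 0 1) ∧ curveLen τ ≤ curveLen σ / 2 by
    rcases le_total s u with h | h
    · exact H s u hs hu h
    · obtain ⟨τ, hτc, hτ0, hτ1, hτmem, hτlen⟩ := H u s hu hs h
      refine ⟨fun t => τ (1 + t * (0 - 1)), ?_, ?_, ?_, ?_, ?_⟩
      · refine hτc.comp (continuous_const.add (continuous_id.mul continuous_const)).continuousOn ?_
        intro t ht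
        obtain ⟨ht1, ht2⟩ := ht
        simp only [Set.mem_Icc]
        constructor <;> nlinarith
      · simpa using hτ1
      · simpa using hτ0
      · intro t ht
        obtain ⟨ht1, ht2⟩ := ht
        exact hτmem _ ⟨by nlinarith, by nlinarith⟩
      · rw [curveLen, evar_affine_anti τ (by norm_num : (0:ℝ) ≤ 1)]
        exact hτlen
  intro s u hs hu hsu
  -- the two candidate arcs
  set L1 := eVariationOn σ (Set.Icc s u) with hL1
  set L2 := eVariationOn σ (Set.Icc 0 s) + eVariationOn σ (Set.Icc u 1) with hL2
  have hsum : L1 + L2 = curveLen σ := by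
    have k1 := eVariationOn.Icc_add_Icc σ (s := Set.univ) hs.1 hsu (Set.mem_univ s)
    have k2 := eVariationOn.Icc_add_Icc σ (s := Set.univ) (le_trans hs.1 hsu) hu.2 (Set.mem_univ u)
    simp only [Set.univ_inter] at k1 k2
    rw [curveLen, ← k2, ← k1]
    ring
  have hmin := half_le_min hsum
  rcases le_total L1 L2 with hc | hc
  · -- direct arc
    rw [min_eq_left hc] at hmin
    refine ⟨fun t => σ (s + t * (u - s)), affine_isCurve σ hσ hs hu, by simp, by simp, ?_, ?_⟩
    · intro t ht
      obtain ⟨ht1, ht2⟩ := ht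
      refine ⟨s + t * (u - s), ⟨by nlinarith [hs.1], by nlinarith [hu.2]⟩, rfl⟩
    · rw [affine_curveLen σ hsu]
      exact hmin
  · -- arc through the basepoint
    rw [min_eq_right hc] at hmin
    set A : ℝ → X := fun t => σ (s + t * (0 - s)) with hA
    set B : ℝ → X := fun t => σ (1 + t * (u - 1)) with hB
    have hAcurve : IsCurve A := affine_isCurve σ hσ hs ⟨le_refl 0, zero_le_one⟩
    have hBcurve : IsCurve B := affine_isCurve σ hσ ⟨zero_le_one, le_refl 1⟩ hu
    have hAB : A 1 = B 0 := by simp [hA, hB, hσloop]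
    refine ⟨concat A B, concat_isCurve hAcurve hBcurve hAB, ?_, ?_, ?_, ?_⟩
    · rw [concat_apply_zero]
      simp [hA]
    · rw [concat_apply_one]
      simp [hB]
    · refine concat_mem ?_ ?_
      · intro t ht
        obtain ⟨ht1, ht2⟩ := ht
        exact ⟨s + t * (0 - s), ⟨by nlinarith [hs.1], by nlinarith [hs.2]⟩, rfl⟩
      · intro t ht
        obtain ⟨ht1, ht2⟩ := ht
        exact ⟨1 + t * (u - 1), ⟨by nlinarith [hu.1], by nlinarith [hu.2]⟩, rfl⟩
    · rw [concat_curveLen hAB, hA, hB, curveLen, curveLen,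
        evar_affine_anti σ hs.1, evar_affine_anti σ hu.2]
      exact hmin

end Helpers

end MyHelpers

open OGC in
/-- Let `Δ` be a 2-disk contained in a closed Riemannian surface `N`
of intrinsic diameter `D` (any two points are joined by a curve of length at most `D`),
and let `∂Δ` be parameterized by a closed curve `σ` of length `ℓ`. Then the intrinsic
diameter of `Δ` is at most `D + ℓ/2`: any two points of `Δ` are joined by a curve in
`Δ` of length at most `D + ℓ/2`. -/
theorem statement13 {N : Type*} [MetricSpace N] [CompactSpace N]
    [ChartedSpace (EuclideanSpace ℝ (Fin 2)) N]
    (D : ℝ) (hD : ∀ x y : N, ∃ γ : ℝ → N, IsCurve γ ∧ γ 0 = x ∧ γ 1 = y ∧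
      curveLen γ ≤ ENNReal.ofReal D)
    (Δ : Set N) (hΔclosed : IsClosed Δ)
    (hdisk : Nonempty (Δ ≃ₜ Metric.closedBall (0 : EuclideanSpace ℝ (Fin 2)) 1))
    (σ : ℝ → N) (hσ : IsCurve σ) (hσloop : σ 1 = σ 0)
    (hσbd : σ '' Set.Icc 0 1 = frontier Δ)
    (ℓ : ℝ) (hℓ : curveLen σ = ENNReal.ofReal ℓ) :
    ∀ x ∈ Δ, ∀ y ∈ Δ, ∃ γ : ℝ → N, IsCurve γ ∧ (∀ t ∈ Set.Icc (0:ℝ) 1, γ t ∈ Δ) ∧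
      γ 0 = x ∧ γ 1 = y ∧ curveLen γ ≤ ENNReal.ofReal (D + ℓ / 2) := by
  intro x hx y hy
  have hfsub : frontier Δ ⊆ Δ := by
    have h := frontier_subset_closure (s := Δ)
    rwa [hΔclosed.closure_eq] at h
  -- rule out ℓ < 0 using the topology of the disk
  rcases lt_or_ge ℓ 0 with hlneg | hl0
  · exfalso
    have hσ0 : curveLen σ = 0 := by
      rw [hℓ, ENNReal.ofReal_eq_zero]
      linarith
    have hconst : ∀ t ∈ Set.Icc (0:ℝ) 1, σ t = σ 0 := by
      intro t ht
      have h00 : (0:ℝ) ∈ Set.Icc (0:ℝ) 1 := by norm_num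
      have hz : eVariationOn σ (Set.Icc 0 1) = 0 := hσ0
      have := (eVariationOn.eq_zero_iff σ).1 hz t ht 0 h00
      exact edist_eq_zero.1 this
    have hfr : frontier Δ = {σ 0} := by
      rw [← hσbd]
      ext z
      simp only [Set.mem_image, Set.mem_singleton_iff]
      constructor
      · rintro ⟨t, ht, rfl⟩
        exact hconst t ht
      · rintro rfl
        exact ⟨0, ⟨le_refl 0, zero_le_one⟩, rfl⟩
    obtain ⟨e⟩ := hdisk
    -- Δ is connected
    have hballconn : ConnectedSpace ↥(Metric.closedBall (0 : EuclideanSpace ℝ (Fin 2)) 1) := by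
      rw [← isConnected_iff_connectedSpace]
      exact ((convex_closedBall (0 : EuclideanSpace ℝ (Fin 2)) 1).isPathConnected
        ⟨0, Metric.mem_closedBall_self zero_le_one⟩).isConnected
    have hrange : Set.range (fun b : ↥(Metric.closedBall (0 : EuclideanSpace ℝ (Fin 2)) 1) =>
        ((e.symm b : Δ) : N)) = Δ := by
      ext z
      simp only [Set.mem_range]
      constructor
      · rintro ⟨b, rfl⟩
        exact (e.symm b).2
      · intro hz
        exact ⟨e ⟨z, hz⟩, by simp⟩
    have hconn : IsPreconnected Δ := by
      rw [← hrange]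
      exact (isConnected_range (continuous_subtype_val.comp e.symm.continuous)).isPreconnected
    -- Δ has two points
    have hq : ∃ q₁ ∈ Δ, ∃ q₂ ∈ Δ, q₁ ≠ q₂ := by
      have h0 : (0 : EuclideanSpace ℝ (Fin 2)) ∈ Metric.closedBall (0 : EuclideanSpace ℝ (Fin 2)) 1 :=
        Metric.mem_closedBall_self zero_le_one
      have h1 : EuclideanSpace.single (0 : Fin 2) (1:ℝ) ∈
          Metric.closedBall (0 : EuclideanSpace ℝ (Fin 2)) 1 := by
        rw [Metric.mem_closedBall, dist_zero_right, EuclideanSpace.norm_single]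
        norm_num
      refine ⟨(e.symm ⟨0, h0⟩ : Δ), (e.symm ⟨0, h0⟩).2,
        (e.symm ⟨EuclideanSpace.single 0 1, h1⟩ : Δ), (e.symm ⟨_, h1⟩).2, ?_⟩
      intro hcontra
      have heq : e.symm ⟨0, h0⟩ = e.symm ⟨EuclideanSpace.single 0 1, h1⟩ := Subtype.ext hcontra
      have := e.symm.injective heq
      have h01 : (0 : EuclideanSpace ℝ (Fin 2)) = EuclideanSpace.single (0 : Fin 2) (1:ℝ) :=
        congrArg Subtype.val this
      have : ‖(0 : EuclideanSpace ℝ (Fin 2))‖ = ‖EuclideanSpace.single (0 : Fin 2) (1:ℝ)‖ := by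
        rw [h01]
      rw [norm_zero, EuclideanSpace.norm_single] at this
      norm_num at this
    exact frontier_singleton_absurd hΔclosed hconn hq hfr
  -- rule out D < 0
  rcases lt_or_ge D 0 with hDneg | hD0
  · obtain ⟨γ, hγc, hγ0, hγ1, hγlen⟩ := hD x y
    have h0 : curveLen γ = 0 := by
      refine le_antisymm ?_ zero_le
      rwa [ENNReal.ofReal_eq_zero.2 (le_of_lt hDneg)] at hγlen
    have hxy : x = y := by
      have h00 : (0:ℝ) ∈ Set.Icc (0:ℝ) 1 := by norm_num
      have h11 : (1:ℝ) ∈ Set.Icc (0:ℝ) 1 := by norm_num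
      have := eVariationOn.edist_le γ h00 h11
      rw [show eVariationOn γ (Set.Icc 0 1) = 0 from h0] at this
      have := le_antisymm this zero_le
      rw [edist_eq_zero] at this
      rw [← hγ0, ← hγ1]
      exact this
    refine ⟨fun _ => x, continuousOn_const, fun t _ => hx, rfl, hxy ▸ rfl, ?_⟩
    have : curveLen (fun _ : ℝ => x) = 0 := by
      rw [curveLen, eVariationOn.eq_zero_iff]
      intro u _ v _
      simp
    rw [this]
    exact zero_le
  -- main case
  obtain ⟨γ, hγc, hγ0, hγ1, hγlen⟩ := hD x y
  set S := {t : ℝ | t ∈ Set.Icc (0:ℝ) 1 ∧ γ t ∉ Δ} with hS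
  by_cases hSne : S.Nonempty
  swap
  · -- γ stays in Δ
    refine ⟨γ, hγc, ?_, hγ0, hγ1, ?_⟩
    · intro t ht
      by_contra h
      exact hSne ⟨t, ht, h⟩
    · refine le_trans hγlen (ENNReal.ofReal_le_ofReal ?_)
      linarith
  · have hSsub : S ⊆ Set.Icc (0:ℝ) 1 := fun t ht => ht.1
    have hSbb : BddBelow S := ⟨0, fun t ht => ht.1.1⟩
    have hSba : BddAbove S := ⟨1, fun t ht => ht.1.2⟩
    set a := sInf S with ha
    set b := sSup S with hb
    have ha0 : 0 ≤ a := le_csInf hSne fun t ht => ht.1.1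
    have hb1 : b ≤ 1 := csSup_le hSne fun t ht => ht.1.2
    have hab : a ≤ b := csInf_le_csSup hSne hSbb hSba
    have ha1 : a ≤ 1 := hab.trans hb1
    have hb0 : 0 ≤ b := ha0.trans hab
    have haI : a ∈ Set.Icc (0:ℝ) 1 := ⟨ha0, ha1⟩
    have hbI : b ∈ Set.Icc (0:ℝ) 1 := ⟨hb0, hb1⟩
    -- γ is in Δ before a and after b
    have hpreΔ : ∀ r, 0 ≤ r → r < a → γ r ∈ Δ := by
      intro r h0 hr
      by_contra h
      have : r ∈ S := ⟨⟨h0, le_trans hr.le ha1⟩, h⟩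
      exact absurd (csInf_le hSbb this) (not_le.2 hr)
    have hpostΔ : ∀ r, b < r → r ≤ 1 → γ r ∈ Δ := by
      intro r hr h1
      by_contra h
      have : r ∈ S := ⟨⟨le_trans hb0 hr.le, h1⟩, h⟩
      exact absurd (le_csSup hSba this) (not_le.2 hr)
    have hγaΔ : γ a ∈ Δ := by
      rcases eq_or_lt_of_le ha0 with h | h
      · rw [← h, hγ0]; exact hx
      · have hcw : ContinuousWithinAt γ (Set.Ico 0 a) a := by
          refine (hγc a haI).mono ?_
          intro t ht
          exact ⟨ht.1, le_trans ht.2.le ha1⟩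
        have hacl : a ∈ closure (Set.Ico 0 a) := by
          rw [closure_Ico (ne_of_lt h)]
          exact ⟨ha0, le_refl a⟩
        have := hcw.mem_closure_image hacl
        refine hΔclosed.closure_eq ▸ closure_mono ?_ this
        rintro _ ⟨r, hr, rfl⟩
        exact hpreΔ r hr.1 hr.2
    have hγbΔ : γ b ∈ Δ := by
      rcases eq_or_lt_of_le hb1 with h | h
      · rw [h, hγ1]; exact hy
      · have hcw : ContinuousWithinAt γ (Set.Ioc b 1) b := by
          refine (hγc b hbI).mono ?_
          intro t ht
          exact ⟨le_trans hb0 ht.1.le, ht.2⟩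
        have hbcl : b ∈ closure (Set.Ioc b 1) := by
          rw [closure_Ioc (ne_of_lt h)]
          exact ⟨le_refl b, hb1⟩
        have := hcw.mem_closure_image hbcl
        refine hΔclosed.closure_eq ▸ closure_mono ?_ this
        rintro _ ⟨r, hr, rfl⟩
        exact hpostΔ r hr.1 hr.2
    -- γ a and γ b are on the frontier
    have hγafr : γ a ∈ frontier Δ := by
      rw [frontier_eq_closure_inter_closure, hΔclosed.closure_eq]
      refine ⟨hγaΔ, ?_⟩
      have hacl : a ∈ closure S := csInf_mem_closure hSne hSbb
      have hcw : ContinuousWithinAt γ S a := (hγc a haI).mono hSsub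
      have := hcw.mem_closure_image hacl
      refine closure_mono ?_ this
      rintro _ ⟨r, hr, rfl⟩
      exact hr.2
    have hγbfr : γ b ∈ frontier Δ := by
      rw [frontier_eq_closure_inter_closure, hΔclosed.closure_eq]
      refine ⟨hγbΔ, ?_⟩
      have hbcl : b ∈ closure S := csSup_mem_closure hSne hSba
      have hcw : ContinuousWithinAt γ S b := (hγc b hbI).mono hSsub
      have := hcw.mem_closure_image hbcl
      refine closure_mono ?_ this
      rintro _ ⟨r, hr, rfl⟩
      exact hr.2
    -- parameters on σ
    obtain ⟨sa, hsaI, hsa⟩ : γ a ∈ σ '' Set.Icc 0 1 := by rw [hσbd]; exact hγafr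
    obtain ⟨sb, hsbI, hsb⟩ : γ b ∈ σ '' Set.Icc 0 1 := by rw [hσbd]; exact hγbfr
    obtain ⟨τ, hτc, hτ0, hτ1, hτmem, hτlen⟩ := arc_exists σ hσ hσloop hsaI hsbI
    set pre : ℝ → N := fun t => γ (0 + t * (a - 0)) with hpre
    set post : ℝ → N := fun t => γ (b + t * (1 - b)) with hpost
    have hprecurve : IsCurve pre := affine_isCurve γ hγc ⟨le_refl 0, zero_le_one⟩ haI
    have hpostcurve : IsCurve post := affine_isCurve γ hγc hbI ⟨zero_le_one, le_refl 1⟩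
    have hjoin1 : pre 1 = τ 0 := by
      rw [hτ0, hsa, hpre]
      norm_num
    have hjoin2 : concat pre τ 1 = post 0 := by
      rw [concat_apply_one, hτ1, hsb, hpost]
      norm_num
    have hc1 : IsCurve (concat pre τ) := concat_isCurve hprecurve hτc hjoin1
    refine ⟨concat (concat pre τ) post, concat_isCurve hc1 hpostcurve hjoin2, ?_, ?_, ?_, ?_⟩
    · -- membership
      refine concat_mem (concat_mem ?_ ?_) ?_
      · intro t ht
        simp only [hpre]
        have harg : 0 + t * (a - 0) ∈ Set.Icc 0 a := by
          constructor <;> nlinarith [ht.1, ht.2]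
        rcases eq_or_lt_of_le harg.2 with h | h
        · rw [h]; exact hγaΔ
        · exact hpreΔ _ harg.1 h
      · intro t ht
        have := hτmem t ht
        rw [hσbd] at this
        exact hfsub this
      · intro t ht
        simp only [hpost]
        have harg : b + t * (1 - b) ∈ Set.Icc b 1 := by
          constructor <;> nlinarith [ht.1, ht.2]
        rcases eq_or_lt_of_le harg.1 with h | h
        · rw [← h]; exact hγbΔ
        · exact hpostΔ _ h harg.2
    · rw [concat_apply_zero, concat_apply_zero]
      show γ (0 + 0 * (a - 0)) = x
      have heq0 : 0 + 0 * (a - 0) = (0:ℝ) := by ring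
      rw [heq0, hγ0]
    · rw [concat_apply_one]
      show γ (b + 1 * (1 - b)) = y
      have heq1 : b + 1 * (1 - b) = 1 := by ring
      rw [heq1, hγ1]
    · -- length bound
      rw [concat_curveLen hjoin2, concat_curveLen hjoin1]
      have hlenpre : curveLen pre = eVariationOn γ (Set.Icc 0 a) := by
        rw [hpre, affine_curveLen γ ha0]
      have hlenpost : curveLen post = eVariationOn γ (Set.Icc b 1) := by
        rw [hpost, affine_curveLen γ hb1]
      have hsplit : eVariationOn γ (Set.Icc 0 a) + eVariationOn γ (Set.Icc b 1)
          ≤ ENNReal.ofReal D := by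
        have k := eVariationOn.Icc_add_Icc γ (s := Set.univ) hb0 hb1 (Set.mem_univ b)
        simp only [Set.univ_inter] at k
        have hmono : eVariationOn γ (Set.Icc 0 a) ≤ eVariationOn γ (Set.Icc 0 b) :=
          eVariationOn.mono γ (Set.Icc_subset_Icc_right hab)
        calc eVariationOn γ (Set.Icc 0 a) + eVariationOn γ (Set.Icc b 1)
            ≤ eVariationOn γ (Set.Icc 0 b) + eVariationOn γ (Set.Icc b 1) :=
              add_le_add_left hmono _
          _ = eVariationOn γ (Set.Icc 0 1) := k
          _ ≤ ENNReal.ofReal D := hγlen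
      have hτbound : curveLen τ ≤ ENNReal.ofReal (ℓ / 2) := by
        refine le_trans hτlen ?_
        rw [hℓ]
        rw [ENNReal.ofReal_div_of_pos (by norm_num : (0:ℝ) < 2)]
        norm_num
      calc curveLen pre + curveLen τ + curveLen post
          = (curveLen pre + curveLen post) + curveLen τ := by ring
        _ ≤ ENNReal.ofReal D + ENNReal.ofReal (ℓ / 2) := by
            rw [hlenpre, hlenpost]
            exact add_le_add hsplit hτbound
        _ = ENNReal.ofReal (D + ℓ / 2) := (ENNReal.ofReal_add hD0 (by linarith)).symm
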